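/- arXiv:1604.01981 — 3 statements merged into one kernel-verified Lean document; each statement's English description precedes it below -/
import Mathlib

section
/- Let M be an n×n real matrix that is zero except in its last row, with last-row entries (m₁, ..., mₙ), mₙ ≠ 0, and suppose mₙ e^{mₙ} is in the domain where the scalar equation w e^w = mₙ has a solution w = W(mₙ). Define L = (W(mₙ)/mₙ) · M. Then L · exp(L) = M, i.e., L is a matrix Lambert W value of M. -/
attribute [local instance] Matrix.linftyOpNormedRing Matrix.linftyOpNormedAlgebra

open NormedSpace in
/-- If `w e^w = mₙ`, then `L = (w/mₙ) • M` satisfies `L * exp L = M`. -/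
theorem lastRowOnly_lambertW (n : ℕ) (M : Matrix (Fin (n + 1)) (Fin (n + 1)) ℝ)
    (hM : ∀ i, i ≠ Fin.last n → ∀ j, M i j = 0)
    (hmn : M (Fin.last n) (Fin.last n) ≠ 0)
    (w : ℝ) (hw : w * Real.exp w = M (Fin.last n) (Fin.last n)) :
    ((w / M (Fin.last n) (Fin.last n)) • M) *
      exp ((w / M (Fin.last n) (Fin.last n)) • M) = M := by
  set m := M (Fin.last n) (Fin.last n) with hm
  have hw0 : w ≠ 0 := by rintro rfl; simp at hw; exact hmn hw.symm
  have hMsq : M * M = m • M := by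
    ext i j
    rw [Matrix.mul_apply, Finset.sum_eq_single (Fin.last n)]
    · by_cases hi : i = Fin.last n
      · subst hi; simp [hm, mul_comm]
      · simp [hM i hi]
    · intro k _ hk; rw [hM k hk]; ring
    · simp
  set L := (w / m) • M with hL
  have hL2 : L * L = w • L := by
    rw [hL, smul_mul_smul_comm, hMsq, smul_smul, smul_smul]
    congr 1
    field_simp
  have hLpow : ∀ k : ℕ, L ^ (k + 1) = w ^ k • L := by
    intro k
    induction k with
    | zero => simp
    | succ k ih =>
      rw [pow_succ, ih, Matrix.smul_mul, hL2, smul_smul, pow_succ]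
  have hsum : Summable (fun k : ℕ => ((Nat.factorial k : ℝ))⁻¹ • L ^ k) := expSeries_summable' L
  have key : L * exp L = Real.exp w • L := by
    rw [exp_eq_tsum (𝕂 := ℝ)]
    rw [← Summable.tsum_mul_left L hsum]
    have h1 : ∀ k : ℕ, L * (((Nat.factorial k : ℝ))⁻¹ • L ^ k)
        = (w ^ k / (Nat.factorial k : ℝ)) • L := by
      intro k
      rw [mul_smul_comm, ← pow_succ', hLpow, smul_smul]
      congr 1
      field_simp
    rw [tsum_congr h1, Summable.tsum_smul_const (Real.summable_pow_div_factorial w),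
      Real.exp_eq_exp_ℝ, exp_eq_tsum_div]
  rw [← hL] at *
  rw [key, hL, smul_smul]
  have : Real.exp w * (w / m) = 1 := by
    field_simp
    linarith [hw]
  rw [this, one_smul]
end

section
/- Let A ∈ ℝ^{n×n} and b ∈ ℝ^n with the pair (A, b) controllable (the controllability matrix U = [b, Ab, ..., A^{n−1}b] is invertible). Let (Ā, b̄) be the controllable companion form with controllability matrix U_c, and set T = U U_c^{−1}. Then T is invertible, T^{−1} A T = Ā is in companion form, and T^{−1} b = b̄ = eₙ (the n-th standard basis vector). -/
open Matrix Polynomial Finset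

namespace CompanionAux

variable {n : ℕ}

/-- The "right-shift" companion matrix: ones on the subdiagonal, last column `-c`. -/
def compC (n : ℕ) (c : Fin (n + 1) → ℝ) : Matrix (Fin (n + 1)) (Fin (n + 1)) ℝ :=
  fun k j => if j = Fin.last n then -c k else if (k : ℕ) = (j : ℕ) + 1 then 1 else 0

lemma krylov (c : Fin (n + 1) → ℝ) (M : Matrix (Fin (n + 1)) (Fin (n + 1)) ℝ)
    (hM : M ^ (n + 1) = -∑ k : Fin (n + 1), c k • M ^ (k : ℕ))
    (v : Fin (n + 1) → ℝ) (K : Matrix (Fin (n + 1)) (Fin (n + 1)) ℝ)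
    (hK : ∀ i j, K i j = (M ^ (j : ℕ)).mulVec v i) :
    M * K = K * compC n c := by
  ext i j
  have hL : (M * K) i j = ((M ^ ((j : ℕ) + 1)).mulVec v) i := by
    rw [mul_apply]
    have : ∀ m, K m j = ((M ^ (j : ℕ)).mulVec v) m := fun m => hK m j
    calc ∑ m, M i m * K m j = ∑ m, M i m * ((M ^ (j : ℕ)).mulVec v) m := by
          simp_rw [hK]
      _ = (M.mulVec ((M ^ (j : ℕ)).mulVec v)) i := rfl
      _ = ((M * M ^ (j : ℕ)).mulVec v) i := by rw [mulVec_mulVec]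
      _ = ((M ^ ((j : ℕ) + 1)).mulVec v) i := by rw [← pow_succ']
  rw [hL, mul_apply]
  by_cases hj : j = Fin.last n
  · subst hj
    have hCl : ∀ k, compC n c k (Fin.last n) = -c k := fun k => by simp [compC]
    have hsum : ((∑ k : Fin (n + 1), c k • M ^ (k : ℕ)).mulVec v) i
        = ∑ k : Fin (n + 1), c k * ((M ^ (k : ℕ)).mulVec v) i := by
      simp only [mulVec, dotProduct, Matrix.sum_apply, Matrix.smul_apply, smul_eq_mul,
        Finset.sum_mul, Finset.mul_sum, mul_assoc]
      rw [Finset.sum_comm]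
    simp_rw [hCl, hK]
    rw [Fin.val_last, hM, neg_mulVec, Pi.neg_apply, hsum, ← Finset.sum_neg_distrib]
    exact Finset.sum_congr rfl fun k _ => by ring
  · have hjn : (j : ℕ) + 1 < n + 1 := by
      have := Fin.val_lt_last hj
      omega
    have hcollapse : ∀ k : Fin (n + 1), compC n c k j = if k = (⟨(j : ℕ) + 1, hjn⟩ : Fin (n + 1)) then 1 else 0 := by
      intro k
      simp only [compC, if_neg hj]
      by_cases h : (k : ℕ) = (j : ℕ) + 1
      · rw [if_pos h, if_pos (Fin.ext h)]
      · rw [if_neg h, if_neg fun hh => h (by rw [hh])]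
    simp_rw [hcollapse, mul_ite, mul_one, mul_zero, Finset.sum_ite_eq', Finset.mem_univ, if_pos]
    rw [hK]

/-- Row 0 of powers of the companion-form matrix. -/
lemma pow_row_zero (Abar : Matrix (Fin (n + 1)) (Fin (n + 1)) ℝ)
    (hsup : ∀ i : Fin (n + 1), i ≠ Fin.last n →
      ∀ j : Fin (n + 1), Abar i j = if (j : ℕ) = (i : ℕ) + 1 then 1 else 0) :
    ∀ k : ℕ, k ≤ n → ∀ j : Fin (n + 1),
      (Abar ^ k) 0 j = if (j : ℕ) = k then 1 else 0 := by
  intro k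
  induction k with
  | zero =>
    intro _ j
    rw [pow_zero, Matrix.one_apply]
    congr 1
    exact propext ⟨fun h => by simp [← h], fun h => Fin.ext (by simp [h])⟩
  | succ k ih =>
    intro hk j
    have hk' : k ≤ n := Nat.le_of_succ_le hk
    have hklt : k < n + 1 := by omega
    rw [pow_succ, mul_apply]
    have hc : ∀ m : Fin (n + 1), (Abar ^ k) 0 m * Abar m j
        = if m = (⟨k, hklt⟩ : Fin (n + 1)) then Abar m j else 0 := by
      intro m
      rw [ih hk' m]
      by_cases h : (m : ℕ) = k
      · rw [if_pos h, if_pos (Fin.ext h), one_mul]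
      · rw [if_neg h, if_neg (fun hh => h (by rw [hh])), zero_mul]
    simp_rw [hc]
    rw [Finset.sum_ite_eq', if_pos (Finset.mem_univ _)]
    have hne : (⟨k, hklt⟩ : Fin (n + 1)) ≠ Fin.last n := by
      simp [Fin.ext_iff]; omega
    rw [hsup _ hne j]

/-- The companion-form matrix is annihilated by the polynomial from its last row. -/
lemma companion_ann (c : Fin (n + 1) → ℝ) (Abar : Matrix (Fin (n + 1)) (Fin (n + 1)) ℝ)
    (hsup : ∀ i : Fin (n + 1), i ≠ Fin.last n →
      ∀ j : Fin (n + 1), Abar i j = if (j : ℕ) = (i : ℕ) + 1 then 1 else 0)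
    (hlast : ∀ j : Fin (n + 1), Abar (Fin.last n) j = -c j) :
    Abar ^ (n + 1) = -∑ k : Fin (n + 1), c k • Abar ^ (k : ℕ) := by
  set S : Matrix (Fin (n + 1)) (Fin (n + 1)) ℝ :=
    Abar ^ (n + 1) + ∑ k : Fin (n + 1), c k • Abar ^ (k : ℕ) with hS
  have hrow0 : ∀ m, S 0 m = 0 := by
    intro m
    have h1 : (Abar ^ (n + 1)) 0 m = -c m := by
      rw [pow_succ, mul_apply]
      have hc : ∀ t : Fin (n + 1), (Abar ^ n) 0 t * Abar t m
          = if t = Fin.last n then Abar t m else 0 := by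
        intro t
        rw [pow_row_zero Abar hsup n le_rfl t]
        by_cases h : (t : ℕ) = n
        · rw [if_pos h, if_pos (Fin.ext h), one_mul]
        · rw [if_neg h, if_neg (fun hh => h (by rw [hh, Fin.val_last])), zero_mul]
      simp_rw [hc]
      rw [Finset.sum_ite_eq', if_pos (Finset.mem_univ _), hlast]
    have h2 : (∑ k : Fin (n + 1), c k • Abar ^ (k : ℕ)) 0 m = c m := by
      rw [Matrix.sum_apply]
      have hc : ∀ k : Fin (n + 1), (c k • Abar ^ (k : ℕ)) 0 m
          = if k = m then c k else 0 := by
        intro k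
        rw [Matrix.smul_apply, pow_row_zero Abar hsup k (Nat.lt_succ_iff.mp k.isLt) m]
        by_cases h : (m : ℕ) = (k : ℕ)
        · rw [if_pos h, if_pos (Fin.ext h.symm)]; simp
        · rw [if_neg h, if_neg (fun hh => h (by rw [hh]))]; simp
      simp_rw [hc]
      rw [Finset.sum_ite_eq', if_pos (Finset.mem_univ _)]
    rw [hS, Matrix.add_apply, h1, h2]; ring
  have hcomm : ∀ i : Fin (n + 1), Abar ^ (i : ℕ) * S = S * Abar ^ (i : ℕ) := by
    intro i
    have : Commute (Abar ^ (i : ℕ)) S := by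
      rw [hS]
      refine Commute.add_right ?_ ?_
      · exact (Commute.refl Abar).pow_pow _ _
      · refine Commute.sum_right _ _ _ fun k _ => ?_
        exact ((Commute.refl Abar).pow_pow _ _).smul_right _
    exact this.eq
  have hSzero : S = 0 := by
    ext i j
    have hi : (i : ℕ) ≤ n := Nat.lt_succ_iff.mp i.isLt
    have h1 : S i j = (Abar ^ (i : ℕ) * S) 0 j := by
      rw [mul_apply]
      have hc : ∀ m : Fin (n + 1), (Abar ^ (i : ℕ)) 0 m * S m j
          = if m = i then S m j else 0 := by
        intro m
        rw [pow_row_zero Abar hsup i hi m]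
        by_cases h : (m : ℕ) = (i : ℕ)
        · rw [if_pos h, if_pos (Fin.ext h), one_mul]
        · rw [if_neg h, if_neg (fun hh => h (by rw [hh])), zero_mul]
      simp_rw [hc]
      rw [Finset.sum_ite_eq', if_pos (Finset.mem_univ _)]
    rw [h1, hcomm, mul_apply]
    simp only [hrow0, zero_mul]
    simp
  have h := hSzero
  rw [hS] at h
  exact eq_neg_of_add_eq_zero_left h

lemma charpoly_ann (A : Matrix (Fin (n + 1)) (Fin (n + 1)) ℝ) :
    A ^ (n + 1) = -∑ k : Fin (n + 1), A.charpoly.coeff (k : ℕ) • A ^ (k : ℕ) := by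
  have hdeg : A.charpoly.natDegree = n + 1 := by
    simp
  have hmon : A.charpoly.coeff (n + 1) = 1 := by
    have h := A.charpoly_monic.coeff_natDegree
    rwa [hdeg] at h
  have h0 := A.aeval_self_charpoly
  rw [aeval_eq_sum_range, hdeg, Finset.sum_range_succ, hmon, one_smul,
    ← Fin.sum_univ_eq_sum_range (fun i => A.charpoly.coeff i • A ^ i)] at h0
  exact eq_neg_of_add_eq_zero_right h0

lemma Uc_entries (Abar : Matrix (Fin (n + 1)) (Fin (n + 1)) ℝ)
    (hsup : ∀ i : Fin (n + 1), i ≠ Fin.last n →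
      ∀ j : Fin (n + 1), Abar i j = if (j : ℕ) = (i : ℕ) + 1 then 1 else 0) :
    ∀ j : ℕ, j ≤ n → ∀ i : Fin (n + 1),
      (((i : ℕ) + j < n) →
        (Abar ^ j).mulVec (Pi.single (Fin.last n) (1 : ℝ)) i = 0) ∧
      (((i : ℕ) + j = n) →
        (Abar ^ j).mulVec (Pi.single (Fin.last n) (1 : ℝ)) i = 1) := by
  intro j
  induction j with
  | zero =>
    intro _ i
    rw [pow_zero, one_mulVec]
    constructor
    · intro h
      exact Pi.single_eq_of_ne (fun he => by rw [he] at h; simp at h) 1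
    · intro h
      have : i = Fin.last n := Fin.ext (by simpa using h)
      rw [this]; exact Pi.single_eq_same _ _
  | succ j ih =>
    intro hj i
    have hj' : j ≤ n := Nat.le_of_succ_le hj
    have key : ∀ (hlt : (i : ℕ) + 1 < n + 1),
        (Abar ^ (j + 1)).mulVec (Pi.single (Fin.last n) (1 : ℝ)) i
          = (Abar ^ j).mulVec (Pi.single (Fin.last n) (1 : ℝ))
              (⟨(i : ℕ) + 1, hlt⟩ : Fin (n + 1)) := by
      intro hlt
      have hine : i ≠ Fin.last n := by
        intro he; rw [he, Fin.val_last] at hlt; omega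
      have hstep : (Abar ^ (j + 1)).mulVec (Pi.single (Fin.last n) (1 : ℝ)) i
          = (Abar.mulVec ((Abar ^ j).mulVec (Pi.single (Fin.last n) (1 : ℝ)))) i := by
        rw [mulVec_mulVec, ← pow_succ']
      rw [hstep]
      show (Abar i) ⬝ᵥ ((Abar ^ j).mulVec (Pi.single (Fin.last n) (1 : ℝ))) = _
      rw [dotProduct]
      have hc : ∀ m : Fin (n + 1),
          Abar i m * ((Abar ^ j).mulVec (Pi.single (Fin.last n) (1 : ℝ))) m
            = if m = (⟨(i : ℕ) + 1, hlt⟩ : Fin (n + 1)) then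
                ((Abar ^ j).mulVec (Pi.single (Fin.last n) (1 : ℝ))) m else 0 := by
        intro m
        rw [hsup i hine m]
        by_cases h : (m : ℕ) = (i : ℕ) + 1
        · rw [if_pos h, if_pos (Fin.ext h), one_mul]
        · rw [if_neg h, if_neg fun hh => h (by rw [hh]), zero_mul]
      simp_rw [hc]
      rw [Finset.sum_ite_eq', if_pos (Finset.mem_univ _)]
    constructor
    · intro h
      have hlt : (i : ℕ) + 1 < n + 1 := by omega
      rw [key hlt]
      exact (ih hj' _).1 (by simp; omega)
    · intro h
      have hlt : (i : ℕ) + 1 < n + 1 := by omega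
      rw [key hlt]
      exact (ih hj' _).2 (by simp; omega)

lemma anti_tri_det_isUnit (Uc : Matrix (Fin (n + 1)) (Fin (n + 1)) ℝ)
    (h0 : ∀ i j : Fin (n + 1), (i : ℕ) + (j : ℕ) < n → Uc i j = 0)
    (h1 : ∀ i j : Fin (n + 1), (i : ℕ) + (j : ℕ) = n → Uc i j = 1) :
    IsUnit Uc.det := by
  set N : Matrix (Fin (n + 1)) (Fin (n + 1)) ℝ :=
    Uc.submatrix id (Fin.revPerm : Equiv.Perm (Fin (n + 1))) with hN
  have htri : N.BlockTriangular OrderDual.toDual := by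
    intro i j hij
    have hij' : (i : ℕ) < (j : ℕ) := hij
    apply h0
    have hval : ((Fin.revPerm j : Fin (n + 1)) : ℕ) = n + 1 - ((j : ℕ) + 1) :=
      Fin.val_rev j
    simp only [id_eq, hval]
    omega
  have hdiag : ∀ i, N i i = 1 := by
    intro i
    apply h1
    have hval : ((Fin.revPerm i : Fin (n + 1)) : ℕ) = n + 1 - ((i : ℕ) + 1) :=
      Fin.val_rev i
    simp only [id_eq, hval]
    omega
  have hdet : N.det = 1 := by
    rw [det_of_lowerTriangular N htri]
    simp [hdiag]
  have hsign : ((Equiv.Perm.sign (Fin.revPerm : Equiv.Perm (Fin (n + 1)))) : ℝ) * Uc.det = 1 := by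
    rw [← det_permute', ← hN, hdet]
  rw [isUnit_iff_ne_zero]
  intro h
  rw [h, mul_zero] at hsign
  exact one_ne_zero hsign.symm

end CompanionAux

open CompanionAux

open Matrix in
/-- If `(A, b)` is controllable, `(Ā, b̄)` is its controllable companion form with
controllability matrix `U_c`, and `T = U U_c⁻¹`, then `T` is invertible,
`T⁻¹ A T = Ā`, and `T⁻¹ b = b̄ = eₙ`. -/
theorem companion_transformation (n : ℕ) (A : Matrix (Fin (n + 1)) (Fin (n + 1)) ℝ)
    (b : Fin (n + 1) → ℝ)
    (U : Matrix (Fin (n + 1)) (Fin (n + 1)) ℝ)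
    (hU : ∀ i j, U i j = (A ^ (j : ℕ)).mulVec b i)
    (hctrb : IsUnit U.det)
    (Abar : Matrix (Fin (n + 1)) (Fin (n + 1)) ℝ)
    (hAbar_sup : ∀ i : Fin (n + 1), i ≠ Fin.last n →
      ∀ j : Fin (n + 1), Abar i j = if (j : ℕ) = (i : ℕ) + 1 then 1 else 0)
    (hAbar_last : ∀ j : Fin (n + 1),
      Abar (Fin.last n) j = -A.charpoly.coeff (j : ℕ))
    (bbar : Fin (n + 1) → ℝ) (hbbar : bbar = Pi.single (Fin.last n) 1)
    (Uc : Matrix (Fin (n + 1)) (Fin (n + 1)) ℝ)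
    (hUc : ∀ i j, Uc i j = (Abar ^ (j : ℕ)).mulVec bbar i)
    (T : Matrix (Fin (n + 1)) (Fin (n + 1)) ℝ) (hT : T = U * Uc⁻¹) :
    IsUnit T.det ∧ T⁻¹ * A * T = Abar ∧ T⁻¹.mulVec b = bbar := by
  set c : Fin (n + 1) → ℝ := fun k => A.charpoly.coeff (k : ℕ) with hc
  have hAann : A ^ (n + 1) = -∑ k : Fin (n + 1), c k • A ^ (k : ℕ) := charpoly_ann A
  have hBann : Abar ^ (n + 1) = -∑ k : Fin (n + 1), c k • Abar ^ (k : ℕ) :=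
    companion_ann c Abar hAbar_sup hAbar_last
  have hAU : A * U = U * compC n c := krylov c A hAann b U hU
  have hBUc : Abar * Uc = Uc * compC n c := krylov c Abar hBann bbar Uc hUc
  have h0 : ∀ i j : Fin (n + 1), (i : ℕ) + (j : ℕ) < n → Uc i j = 0 := by
    intro i j h
    rw [hUc i j, hbbar]
    exact (Uc_entries Abar hAbar_sup j (Nat.lt_succ_iff.mp j.isLt) i).1 h
  have h1 : ∀ i j : Fin (n + 1), (i : ℕ) + (j : ℕ) = n → Uc i j = 1 := by
    intro i j h
    rw [hUc i j, hbbar]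
    exact (Uc_entries Abar hAbar_sup j (Nat.lt_succ_iff.mp j.isLt) i).2 h
  have hUcdet : IsUnit Uc.det := anti_tri_det_isUnit Uc h0 h1
  have hTdet : IsUnit T.det := by
    rw [hT, det_mul]
    exact hctrb.mul (Uc.isUnit_nonsing_inv_det hUcdet)
  have hTinv : T⁻¹ = Uc * U⁻¹ := by
    rw [hT, Matrix.mul_inv_rev, Uc.nonsing_inv_nonsing_inv hUcdet]
  refine ⟨hTdet, ?_, ?_⟩
  · have hC : U⁻¹ * A * U = compC n c := by
      rw [mul_assoc, hAU, ← mul_assoc, nonsing_inv_mul U hctrb, one_mul]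
    rw [hTinv, hT]
    have hassoc : Uc * U⁻¹ * A * (U * Uc⁻¹) = Uc * (U⁻¹ * A * U) * Uc⁻¹ := by
      simp only [mul_assoc]
    rw [hassoc, hC, ← hBUc, mul_assoc, mul_nonsing_inv Uc hUcdet, mul_one]
  · have hb : U.mulVec (Pi.single (0 : Fin (n + 1)) (1 : ℝ)) = b := by
      ext i
      show (U i) ⬝ᵥ _ = b i
      rw [dotProduct]
      simp only [Pi.single_apply, mul_ite, mul_one, mul_zero]
      rw [Finset.sum_ite_eq', if_pos (Finset.mem_univ _), hU]
      simp
    have hUcb : Uc.mulVec (Pi.single (0 : Fin (n + 1)) (1 : ℝ)) = bbar := by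
      ext i
      show (Uc i) ⬝ᵥ _ = bbar i
      rw [dotProduct]
      simp only [Pi.single_apply, mul_ite, mul_one, mul_zero]
      rw [Finset.sum_ite_eq', if_pos (Finset.mem_univ _), hUc]
      simp
    rw [hTinv, ← hb, mulVec_mulVec, mul_assoc, nonsing_inv_mul U hctrb, mul_one, hUcb]
end

section
/- If −1/e ≤ a_d h e^{−ah} < 0 for reals a, a_d and h > 0, then the scalar delay characteristic equation λ − a − a_d e^{−λh} = 0 has exactly two real roots (counted with multiplicity one each when a_d h e^{−ah} > −1/e), given by λ = a + W₀(a_d h e^{−ah})/h and λ = a + W₋₁(a_d h e^{−ah})/h. -/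
open Real Set

private lemma wexp_hasDerivAt (x : ℝ) :
    HasDerivAt (fun w : ℝ => w * Real.exp w) ((1 + x) * Real.exp x) x := by
  have h : HasDerivAt (fun w : ℝ => w * Real.exp w) (1 * Real.exp x + x * Real.exp x) x :=
    (hasDerivAt_id x).mul (Real.hasDerivAt_exp x)
  convert h using 1
  simp [id]
  ring

private lemma wexp_strictMonoOn :
    StrictMonoOn (fun w : ℝ => w * Real.exp w) (Icc (-1) 0) := by
  apply strictMonoOn_of_deriv_pos (convex_Icc _ _)
  · exact (continuous_id.mul Real.continuous_exp).continuousOn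
  · intro x hx
    rw [interior_Icc] at hx
    rw [(wexp_hasDerivAt x).deriv]
    have h1 : 0 < 1 + x := by linarith [hx.1]
    positivity

private lemma wexp_strictAntiOn :
    StrictAntiOn (fun w : ℝ => w * Real.exp w) (Iic (-1)) := by
  apply strictAntiOn_of_deriv_neg (convex_Iic _)
  · exact (continuous_id.mul Real.continuous_exp).continuousOn
  · intro x hx
    rw [interior_Iic, mem_Iio] at hx
    rw [(wexp_hasDerivAt x).deriv]
    have h1 : 1 + x < 0 := by linarith
    exact mul_neg_of_neg_of_pos h1 (Real.exp_pos x)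

private lemma wexp_lower (w : ℝ) (hw : w < 0) : 4 / w ≤ w * Real.exp w := by
  have hsq : w ^ 2 ≤ 4 * Real.exp (-w) := by
    have h1 : -w / 2 + 1 ≤ Real.exp (-w / 2) := by
      have := Real.add_one_le_exp (-w / 2); linarith
    have h2 : (-w / 2) ^ 2 ≤ (Real.exp (-w / 2)) ^ 2 := by
      apply pow_le_pow_left₀ (by linarith) (by linarith)
    have h3 : (Real.exp (-w / 2)) ^ 2 = Real.exp (-w) := by
      rw [sq, ← Real.exp_add]; ring_nf
    nlinarith
  rw [div_le_iff_of_neg hw]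
  have h4 : w ^ 2 * Real.exp w ≤ 4 * Real.exp (-w) * Real.exp w :=
    mul_le_mul_of_nonneg_right hsq (Real.exp_pos w).le
  have h5 : Real.exp (-w) * Real.exp w = 1 := by
    rw [← Real.exp_add]; simp
  nlinarith [Real.exp_pos w]

private lemma char_eq_iff (a ad h lam : ℝ) (hh : 0 < h) :
    lam - a - ad * Real.exp (-lam * h) = 0 ↔
      (h * (lam - a)) * Real.exp (h * (lam - a)) = ad * h * Real.exp (-a * h) := by
  have he : Real.exp (h * (lam - a)) * Real.exp (-lam * h) = Real.exp (-a * h) := by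
    rw [← Real.exp_add]; ring_nf
  constructor
  · intro heq
    have h2 : lam - a = ad * Real.exp (-lam * h) := by linarith
    calc h * (lam - a) * Real.exp (h * (lam - a))
        = ad * h * (Real.exp (h * (lam - a)) * Real.exp (-lam * h)) := by rw [h2]; ring
      _ = ad * h * Real.exp (-a * h) := by rw [he]
  · intro heq
    have hE : (0:ℝ) < Real.exp (h * (lam - a)) := Real.exp_pos _
    have h4 : h * (lam - a) * Real.exp (h * (lam - a))
        = ad * h * (Real.exp (h * (lam - a)) * Real.exp (-lam * h)) := by
      rw [he]; exact heq
    have h5 : (h * Real.exp (h * (lam - a))) * (lam - a)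
        = (h * Real.exp (h * (lam - a))) * (ad * Real.exp (-lam * h)) := by
      linear_combination h4
    have h6 := mul_left_cancel₀ (ne_of_gt (mul_pos hh hE)) h5
    linarith

/-- If `-1/e ≤ a_d h e^{-a h} < 0`, the scalar delay characteristic equation has
exactly two real roots, `a + W₀(a_d h e^{-a h})/h` and `a + W₋₁(a_d h e^{-a h})/h`,
distinct when `a_d h e^{-a h} > -1/e`. -/
theorem scalar_delay_two_real_roots (a ad h : ℝ) (hh : 0 < h)
    (hz₁ : -(Real.exp 1)⁻¹ ≤ ad * h * Real.exp (-a * h))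
    (hz₂ : ad * h * Real.exp (-a * h) < 0) :
    ∃ w₀ w₁ : ℝ,
      w₀ * Real.exp w₀ = ad * h * Real.exp (-a * h) ∧
      w₁ * Real.exp w₁ = ad * h * Real.exp (-a * h) ∧
      -1 ≤ w₀ ∧ w₁ ≤ -1 ∧
      (∀ lam : ℝ, lam - a - ad * Real.exp (-lam * h) = 0 ↔
        lam = a + w₀ / h ∨ lam = a + w₁ / h) ∧
      (-(Real.exp 1)⁻¹ < ad * h * Real.exp (-a * h) → a + w₀ / h ≠ a + w₁ / h) := by
  set z : ℝ := ad * h * Real.exp (-a * h) with hz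
  have hfc : Continuous (fun w : ℝ => w * Real.exp w) :=
    continuous_id.mul Real.continuous_exp
  have hfneg1 : (-1 : ℝ) * Real.exp (-1) = -(Real.exp 1)⁻¹ := by
    simp [Real.exp_neg]
  -- w₀ via IVT on [-1, 0]
  obtain ⟨w₀, hw₀mem, hw₀⟩ : ∃ w₀ ∈ Icc (-1 : ℝ) 0, w₀ * Real.exp w₀ = z := by
    have := intermediate_value_Icc (by norm_num : (-1:ℝ) ≤ 0) hfc.continuousOn
      (show z ∈ Icc ((-1 : ℝ) * Real.exp (-1)) ((0 : ℝ) * Real.exp 0) by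
        constructor
        · rw [hfneg1]; exact hz₁
        · simp; linarith)
    obtain ⟨w₀, hmem, heq⟩ := this
    exact ⟨w₀, hmem, heq⟩
  -- w₁ via IVT on [M, -1] with M = 4/z - 1
  set M : ℝ := 4 / z - 1 with hM
  have hMz : 4 / z < 0 := div_neg_of_pos_of_neg (by norm_num) hz₂
  have hMneg : M < -1 := by rw [hM]; linarith
  have hfM : z ≤ M * Real.exp M := by
    have h1 : 4 / M ≤ M * Real.exp M := wexp_lower M (by linarith)
    have h2 : z ≤ 4 / M := by
      rw [le_div_iff_of_neg (by linarith : M < 0)]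
      have h3 : z * M = 4 - z := by
        rw [hM]; field_simp [hz₂.ne]
      linarith
    exact h2.trans h1
  obtain ⟨w₁, hw₁mem, hw₁⟩ : ∃ w₁ ∈ Icc M (-1 : ℝ), w₁ * Real.exp w₁ = z := by
    have := intermediate_value_Icc' (le_of_lt hMneg) hfc.continuousOn
      (show z ∈ Icc ((-1 : ℝ) * Real.exp (-1)) (M * Real.exp M) by
        constructor
        · rw [hfneg1]; exact hz₁
        · exact hfM)
    obtain ⟨w₁, hmem, heq⟩ := this
    exact ⟨w₁, hmem, heq⟩
  -- uniqueness
  have huniq : ∀ w : ℝ, w * Real.exp w = z → w = w₀ ∨ w = w₁ := by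
    intro w hw
    have hwneg : w < 0 := by
      by_contra hge
      push_neg at hge
      have : 0 ≤ w * Real.exp w := mul_nonneg hge (Real.exp_pos w).le
      rw [hw] at this; linarith
    rcases le_or_gt w (-1) with hle | hgt
    · right
      exact wexp_strictAntiOn.injOn hle hw₁mem.2 (by rw [hw, hw₁])
    · left
      exact wexp_strictMonoOn.injOn ⟨hgt.le, hwneg.le⟩ hw₀mem (by rw [hw, hw₀])
  refine ⟨w₀, w₁, hw₀, hw₁, hw₀mem.1, hw₁mem.2, ?_, ?_⟩
  · intro lam
    rw [char_eq_iff a ad h lam hh]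
    constructor
    · intro heq
      rcases huniq (h * (lam - a)) heq with h1 | h1
      · left
        rw [← h1]
        field_simp
        ring
      · right
        rw [← h1]
        field_simp
        ring
    · rintro (rfl | rfl)
      · have he : h * (a + w₀ / h - a) = w₀ := by field_simp; ring
        rw [he, hw₀]
      · have he : h * (a + w₁ / h - a) = w₁ := by field_simp; ring
        rw [he, hw₁]
  · intro hgt heq
    have h2 : w₀ / h = w₁ / h := by linarith
    have hww : w₀ = w₁ := by
      field_simp [hh.ne'] at h2
      exact h2
    have h3 : w₀ = -1 := le_antisymm (hww ▸ hw₁mem.2) hw₀mem.1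
    rw [h3, hfneg1] at hw₀
    linarith
end
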